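/- As formal power series, (1/(q;q)_∞) Σ_{n=1}^∞ (-1)^{n-1} q^{3n(n+1)/2} = (1/((q;q^3)_∞ (q^2;q^3)_∞)) Σ_{n=0}^∞ q^{3(n+1)^2} / ((q^3;q^3)_n (q^3;q^3)_{n+1}). -/

import Mathlib

open PowerSeries Finset

noncomputable instance : TopologicalSpace (PowerSeries ℚ) :=
  inferInstanceAs (TopologicalSpace ((Unit →₀ ℕ) → ℚ))

/-- The rank of a partition: largest part minus number of parts. -/
def rank {n : ℕ} (P : n.Partition) : ℤ :=
  (P.parts.sup : ℤ) - (Multiset.card P.parts : ℤ)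

/-- The crank of a partition. -/
def crank {n : ℕ} (P : n.Partition) : ℤ :=
  if P.parts.count 1 = 0 then (P.parts.sup : ℤ)
  else ((P.parts.filter (fun x => P.parts.count 1 < x)).card : ℤ) - (P.parts.count 1 : ℤ)

/-- The number of partitions of `n`. -/
noncomputable def p (n : ℕ) : ℕ := Nat.card n.Partition

/-- `p` extended to the integers by `0` on negatives. -/
noncomputable def pz (m : ℤ) : ℕ := if 0 ≤ m then p m.toNat else 0

/-- The number of partitions of `n` with non-negative rank. -/
noncomputable def Nrank (n : ℕ) : ℕ := Nat.card {P : n.Partition // 0 ≤ rank P}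

/-- The number of partitions of `n` with positive rank. -/
noncomputable def Rrank (n : ℕ) : ℕ := Nat.card {P : n.Partition // 0 < rank P}

/-- The number of Garden of Eden partitions of `n` (rank at most `-2`). -/
noncomputable def gePart (n : ℕ) : ℕ := Nat.card {P : n.Partition // rank P ≤ -2}

/-- The number of partitions of `n` with non-negative crank. -/
noncomputable def Ccrank (n : ℕ) : ℕ := Nat.card {P : n.Partition // 0 ≤ crank P}

/-- The number of partitions of `n` with positive crank. -/
noncomputable def Dcrank (n : ℕ) : ℕ := Nat.card {P : n.Partition // 0 < crank P}

/-- The number of partitions of `n` in which `k` is the least positive integer that is not a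
part and there are more parts greater than `k` than parts less than `k`. -/
noncomputable def Mk (k n : ℕ) : ℕ := Nat.card {P : n.Partition //
  (∀ i, 1 ≤ i → i < k → (i : ℕ) ∈ P.parts) ∧ (k : ℕ) ∉ P.parts ∧
  (P.parts.filter (fun x => x < k)).card < (P.parts.filter (fun x => k < x)).card}

/-- The number of partitions of `n` with no part divisible by 3. -/
noncomputable def p3 (n : ℕ) : ℕ := Nat.card {P : n.Partition // ∀ x ∈ P.parts, ¬ (3 ∣ x)}

/-- The infinite product `(q;q)_∞` as a formal power series. -/
noncomputable def E : PowerSeries ℚ := ∏' i : ℕ, (1 - (X : PowerSeries ℚ) ^ (i + 1))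

/-- The finite product `(q;q)_n` as a formal power series. -/
noncomputable def qPoch (n : ℕ) : PowerSeries ℚ :=
  ∏ i ∈ range n, (1 - (X : PowerSeries ℚ) ^ (i + 1))

/-- `(q^3;q^3)_n` as a formal power series. -/
noncomputable def qPoch3 (n : ℕ) : PowerSeries ℚ :=
  ∏ i ∈ range n, (1 - (X : PowerSeries ℚ) ^ (3 * (i + 1)))

/-- `(q;q^3)_∞` as a formal power series. -/
noncomputable def E3a : PowerSeries ℚ := ∏' i : ℕ, (1 - (X : PowerSeries ℚ) ^ (3 * i + 1))

/-- `(q^2;q^3)_∞` as a formal power series. -/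
noncomputable def E3b : PowerSeries ℚ := ∏' i : ℕ, (1 - (X : PowerSeries ℚ) ^ (3 * i + 2))

open Filter

noncomputable instance : T2Space (PowerSeries ℚ) :=
  inferInstanceAs (T2Space ((Unit →₀ ℕ) → ℚ))

lemma tendsto_of_coeff {α : Type*} {l : Filter α} {F : α → PowerSeries ℚ} {a : PowerSeries ℚ}
    (h : ∀ d : ℕ, Tendsto (fun x => coeff d (F x)) l (nhds (coeff d a))) :
    Tendsto F l (nhds a) := by
  apply tendsto_pi_nhds.mpr
  intro m
  have hm : m = Finsupp.single () (m ()) := by ext; simp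
  have h2 := h (m ())
  simp only [PowerSeries.coeff, MvPowerSeries.coeff, ← hm] at h2
  exact h2

lemma ps_eq_of_forall_dvd {a b : PowerSeries ℚ}
    (h : ∀ D : ℕ, (X : PowerSeries ℚ) ^ D ∣ a - b) : a = b := by
  ext d
  have := (X_pow_dvd_iff.mp (h (d + 1))) d (by omega)
  rw [map_sub] at this
  linarith [this]

lemma dvd_sub_mul {D : ℕ} {a a' b b' : PowerSeries ℚ} (ha : (X : PowerSeries ℚ) ^ D ∣ a - a')
    (hb : (X : PowerSeries ℚ) ^ D ∣ b - b') : (X : PowerSeries ℚ) ^ D ∣ a * b - a' * b' := by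
  have : a * b - a' * b' = a * (b - b') + (a - a') * b' := by ring
  rw [this]
  exact dvd_add (Dvd.dvd.mul_left hb a) (Dvd.dvd.mul_right ha b')

lemma dvd_prod_sub_one {D : ℕ} {T : Finset ℕ} {g : ℕ → PowerSeries ℚ}
    (h : ∀ i ∈ T, (X : PowerSeries ℚ) ^ D ∣ g i - 1) :
    (X : PowerSeries ℚ) ^ D ∣ (∏ i ∈ T, g i) - 1 := by
  classical
  induction T using Finset.induction_on with
  | empty => simp
  | @insert a s ha ih =>
      rw [Finset.prod_insert ha]
      have h1 := h a (Finset.mem_insert_self a s)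
      have h2 := ih (fun i hi => h i (Finset.mem_insert_of_mem hi))
      have : g a * (∏ i ∈ s, g i) - 1
          = g a * ((∏ i ∈ s, g i) - 1) + (g a - 1) := by ring
      rw [this]
      exact dvd_add (Dvd.dvd.mul_left h2 _) h1

lemma coeff_eq_of_dvd {D d : ℕ} {a b : PowerSeries ℚ} (h : (X : PowerSeries ℚ) ^ D ∣ a - b)
    (hd : d < D) : coeff d a = coeff d b := by
  have := (X_pow_dvd_iff.mp h) d hd
  rw [map_sub] at this
  linarith

/-- finite products of `1 - X^(e i)` agree mod `X^D` once the cutoff is ≥ `D`. -/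
lemma finprod_mod (e : ℕ → ℕ) (he : ∀ i, i < e i) {D M L : ℕ} (hDM : D ≤ M) (hML : M ≤ L) :
    (X : PowerSeries ℚ) ^ D ∣
      (∏ i ∈ range L, (1 - (X : PowerSeries ℚ) ^ (e i))) - ∏ i ∈ range M, (1 - (X : PowerSeries ℚ) ^ (e i)) := by
  have hsub : range M ⊆ range L := by
    intro x hx; simp only [mem_range] at *; omega
  rw [← Finset.prod_sdiff hsub]
  have h1 : (X : PowerSeries ℚ) ^ D ∣ (∏ i ∈ range L \ range M, (1 - (X : PowerSeries ℚ) ^ (e i))) - 1 := by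
    apply dvd_prod_sub_one
    intro i hi
    simp only [Finset.mem_sdiff, mem_range] at hi
    have : D ≤ e i := by have := he i; omega
    have : (X : PowerSeries ℚ) ^ D ∣ X ^ (e i) := pow_dvd_pow _ this
    simpa using this.neg_right
  have : (∏ i ∈ range L \ range M, (1 - (X : PowerSeries ℚ) ^ (e i))) * ∏ i ∈ range M, (1 - (X : PowerSeries ℚ) ^ (e i))
      - ∏ i ∈ range M, (1 - (X : PowerSeries ℚ) ^ (e i))
      = ((∏ i ∈ range L \ range M, (1 - (X : PowerSeries ℚ) ^ (e i))) - 1) * ∏ i ∈ range M, (1 - (X : PowerSeries ℚ) ^ (e i)) := by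
    ring
  rw [this]
  exact h1.mul_right _

/-- The canonical value of an infinite product `∏ (1 - X^(e i))`. -/
noncomputable def prodVal (e : ℕ → ℕ) : PowerSeries ℚ :=
  mk fun d => coeff d (∏ i ∈ range (d + 1), (1 - (X : PowerSeries ℚ) ^ (e i)))

lemma hasProd_one_sub_X_pow (e : ℕ → ℕ) (he : ∀ i, i < e i) :
    HasProd (fun i => 1 - (X : PowerSeries ℚ) ^ (e i)) (prodVal e) := by
  rw [HasProd]
  apply tendsto_of_coeff
  intro d
  apply Tendsto.congr' _ tendsto_const_nhds
  filter_upwards [eventually_ge_atTop (range (d + 1))] with s hs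
  have hsub : range (d + 1) ⊆ s := hs
  rw [← Finset.prod_sdiff hsub]
  have h1 : (X : PowerSeries ℚ) ^ (d + 1) ∣ (∏ i ∈ s \ range (d + 1), (1 - (X : PowerSeries ℚ) ^ (e i))) - 1 := by
    apply dvd_prod_sub_one
    intro i hi
    simp only [Finset.mem_sdiff, mem_range] at hi
    have : d + 1 ≤ e i := by have := he i; omega
    have : (X : PowerSeries ℚ) ^ (d + 1) ∣ X ^ (e i) := pow_dvd_pow _ this
    simpa using this.neg_right
  have key : coeff d ((∏ i ∈ s \ range (d + 1), (1 - (X : PowerSeries ℚ) ^ (e i))) * ∏ i ∈ range (d + 1), (1 - (X : PowerSeries ℚ) ^ (e i)))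
      = coeff d (∏ i ∈ range (d + 1), (1 - (X : PowerSeries ℚ) ^ (e i))) := by
    apply coeff_eq_of_dvd (D := d + 1) _ (by omega)
    have : (∏ i ∈ s \ range (d + 1), (1 - (X : PowerSeries ℚ) ^ (e i))) * ∏ i ∈ range (d + 1), (1 - (X : PowerSeries ℚ) ^ (e i))
        - ∏ i ∈ range (d + 1), (1 - (X : PowerSeries ℚ) ^ (e i))
        = ((∏ i ∈ s \ range (d + 1), (1 - (X : PowerSeries ℚ) ^ (e i))) - 1) * ∏ i ∈ range (d + 1), (1 - (X : PowerSeries ℚ) ^ (e i)) := by ring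
    rw [this]
    exact h1.mul_right _
  rw [prodVal, key, coeff_mk]

lemma tprod_mod (e : ℕ → ℕ) (he : ∀ i, i < e i) {D M : ℕ} (hDM : D ≤ M) :
    (X : PowerSeries ℚ) ^ D ∣
      (∏' i, (1 - (X : PowerSeries ℚ) ^ (e i))) - ∏ i ∈ range M, (1 - (X : PowerSeries ℚ) ^ (e i)) := by
  rw [(hasProd_one_sub_X_pow e he).tprod_eq]
  rw [X_pow_dvd_iff]
  intro d hd
  rw [map_sub, prodVal, coeff_mk, sub_eq_zero]
  have h1 := finprod_mod e he (D := d + 1) (M := d + 1) (L := max M (d + 1)) le_rfl (le_max_right _ _)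
  have h2 := finprod_mod e he (D := d + 1) (M := M) (L := max M (d + 1)) (by omega) (le_max_left _ _)
  rw [← coeff_eq_of_dvd h1 (by omega)]
  exact coeff_eq_of_dvd h2 (by omega)


/-- The canonical value of an infinite sum whose `n`-th term is divisible by `X^n`. -/
noncomputable def sumVal (f : ℕ → PowerSeries ℚ) : PowerSeries ℚ :=
  mk fun d => ∑ n ∈ range (d + 1), coeff d (f n)

lemma hasSum_of_dvd (f : ℕ → PowerSeries ℚ) (hf : ∀ n, (X : PowerSeries ℚ) ^ n ∣ f n) :
    HasSum f (sumVal f) := by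
  rw [HasSum]
  apply tendsto_of_coeff
  intro d
  apply Tendsto.congr' _ tendsto_const_nhds
  filter_upwards [eventually_ge_atTop (range (d + 1))] with s hs
  have hsub : range (d + 1) ⊆ s := hs
  rw [map_sum, sumVal, coeff_mk]
  exact Finset.sum_subset hsub (fun n _ hn' => by
    simp only [mem_range, not_lt] at hn'
    exact (X_pow_dvd_iff.mp (hf n)) d (by omega))

lemma tsum_mod (f : ℕ → PowerSeries ℚ) (hf : ∀ n, (X : PowerSeries ℚ) ^ n ∣ f n) {D M : ℕ}
    (hDM : D ≤ M) :
    (X : PowerSeries ℚ) ^ D ∣ (∑' n, f n) - ∑ n ∈ range M, f n := by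
  rw [(hasSum_of_dvd f hf).tsum_eq, X_pow_dvd_iff]
  intro d hd
  rw [map_sub, sumVal, coeff_mk, map_sum, sub_eq_zero]
  apply Finset.sum_subset (by intro x hx; simp only [mem_range] at *; omega)
  intro n hn hn'
  simp only [mem_range, not_lt] at hn'
  exact (X_pow_dvd_iff.mp (hf n)) d (by omega)

/-- `(q^{3s}; q^3)_∞`. -/
noncomputable def PF (s : ℕ) : PowerSeries ℚ := ∏' i : ℕ, (1 - (X : PowerSeries ℚ) ^ (3 * (s + i)))

noncomputable def Q3 (n : ℕ) : PowerSeries ℚ := (qPoch3 n)⁻¹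

lemma constCoeff_qPoch3 (n : ℕ) : constantCoeff (qPoch3 n) = 1 := by
  rw [qPoch3, map_prod]
  apply Finset.prod_eq_one
  intro i _
  simp

lemma qPoch3_succ (n : ℕ) : qPoch3 (n + 1) = qPoch3 n * (1 - X ^ (3 * (n + 1))) := by
  rw [qPoch3, qPoch3, Finset.prod_range_succ]

lemma Q3_mul (n : ℕ) : qPoch3 n * Q3 n = 1 :=
  PowerSeries.mul_inv_cancel _ (by rw [constCoeff_qPoch3]; norm_num)

lemma one_sub_mul_Q3 (n : ℕ) : (1 - X ^ (3 * (n + 1))) * Q3 (n + 1) = Q3 n := by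
  have h1 := Q3_mul n
  have h2 := Q3_mul (n + 1)
  calc (1 - X ^ (3 * (n + 1))) * Q3 (n + 1)
      = (qPoch3 n * Q3 n) * ((1 - X ^ (3 * (n + 1))) * Q3 (n + 1)) := by rw [h1]; ring
    _ = (qPoch3 (n + 1) * Q3 (n + 1)) * Q3 n := by rw [qPoch3_succ]; ring
    _ = Q3 n := by rw [h2]; ring

lemma PF_mod (s : ℕ) (hs : 1 ≤ s) {D M : ℕ} (hDM : D ≤ M) :
    (X : PowerSeries ℚ) ^ D ∣ PF s - ∏ i ∈ range M, (1 - (X : PowerSeries ℚ) ^ (3 * (s + i))) :=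
  tprod_mod (fun i => 3 * (s + i)) (fun i => (by omega : i < 3 * (s + i))) hDM

lemma PF_succ (s : ℕ) (hs : 1 ≤ s) : PF s = (1 - X ^ (3 * s)) * PF (s + 1) := by
  apply ps_eq_of_forall_dvd
  intro D
  have h1 := PF_mod s hs (D := D) (M := D + 1) (by omega)
  have h2 := PF_mod (s + 1) (by omega) (D := D) (M := D) (by omega)
  have key : (∏ i ∈ range (D + 1), (1 - (X : PowerSeries ℚ) ^ (3 * (s + i))))
      = (1 - X ^ (3 * s)) * ∏ i ∈ range D, (1 - (X : PowerSeries ℚ) ^ (3 * (s + 1 + i))) := by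
    rw [Finset.prod_range_succ']
    have : ∀ i, (1 : PowerSeries ℚ) - X ^ (3 * (s + (i + 1))) = 1 - X ^ (3 * (s + 1 + i)) := by
      intro i; rw [show 3 * (s + (i + 1)) = 3 * (s + 1 + i) by ring]
    rw [Finset.prod_congr rfl (fun i _ => this i)]
    rw [show 3 * (s + 0) = 3 * s by ring]
    ring
  have expand : PF s - (1 - X ^ (3 * s)) * PF (s + 1)
      = (PF s - ∏ i ∈ range (D + 1), (1 - (X : PowerSeries ℚ) ^ (3 * (s + i))))
        - (1 - X ^ (3 * s)) * (PF (s + 1) - ∏ i ∈ range D, (1 - (X : PowerSeries ℚ) ^ (3 * (s + 1 + i)))) := by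
    rw [key]; ring
  rw [expand]
  exact dvd_sub h1 (h2.mul_left _)

lemma PF_one_eq (N : ℕ) : PF 1 = qPoch3 N * PF (N + 1) := by
  induction N with
  | zero => simp [qPoch3]
  | succ n ih =>
      rw [ih, PF_succ (n + 1) (by omega), qPoch3_succ]
      rw [show 3 * (n + 1) = 3 * (n + 1) from rfl]
      ring

lemma E_mod {D M : ℕ} (hDM : D ≤ M) : (X : PowerSeries ℚ) ^ D ∣ E - qPoch M :=
  tprod_mod (fun i => i + 1) (fun i => (by omega : i < i + 1)) hDM

lemma E3a_mod {D M : ℕ} (hDM : D ≤ M) :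
    (X : PowerSeries ℚ) ^ D ∣ E3a - ∏ i ∈ range M, (1 - (X : PowerSeries ℚ) ^ (3 * i + 1)) :=
  tprod_mod (fun i => 3 * i + 1) (fun i => (by omega : i < 3 * i + 1)) hDM

lemma E3b_mod {D M : ℕ} (hDM : D ≤ M) :
    (X : PowerSeries ℚ) ^ D ∣ E3b - ∏ i ∈ range M, (1 - (X : PowerSeries ℚ) ^ (3 * i + 2)) :=
  tprod_mod (fun i => 3 * i + 2) (fun i => (by omega : i < 3 * i + 2)) hDM

lemma qPoch_split (M : ℕ) :
    qPoch (3 * M) = (∏ i ∈ range M, (1 - (X : PowerSeries ℚ) ^ (3 * i + 1)))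
      * (∏ i ∈ range M, (1 - (X : PowerSeries ℚ) ^ (3 * i + 2)))
      * ∏ i ∈ range M, (1 - (X : PowerSeries ℚ) ^ (3 * (1 + i))) := by
  induction M with
  | zero => simp [qPoch]
  | succ n ih =>
      rw [show 3 * (n + 1) = (3 * n + 1) + 1 + 1 by ring]
      rw [qPoch, Finset.prod_range_succ, Finset.prod_range_succ, Finset.prod_range_succ, ← qPoch]
      rw [Finset.prod_range_succ, Finset.prod_range_succ, Finset.prod_range_succ (f := fun i => 1 - (X : PowerSeries ℚ) ^ (3 * (1 + i)))]
      rw [ih]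
      ring

lemma qPoch_mod {D M L : ℕ} (hDM : D ≤ M) (hML : M ≤ L) :
    (X : PowerSeries ℚ) ^ D ∣ qPoch L - qPoch M :=
  finprod_mod (fun i => i + 1) (fun i => (by omega : i < i + 1)) hDM hML

lemma E_split : E = E3a * E3b * PF 1 := by
  apply ps_eq_of_forall_dvd
  intro D
  have h1 : (X : PowerSeries ℚ) ^ D ∣ E - qPoch (3 * D) :=
    E_mod (by omega)
  have h2 := E3a_mod (D := D) (M := D) le_rfl
  have h3 := E3b_mod (D := D) (M := D) le_rfl
  have h4 := PF_mod 1 le_rfl (D := D) (M := D) le_rfl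
  have h5 : (X : PowerSeries ℚ) ^ D ∣ E3a * E3b * PF 1 - qPoch (3 * D) := by
    rw [qPoch_split]
    exact dvd_sub_mul (dvd_sub_mul h2 h3) h4
  have : E - E3a * E3b * PF 1 = (E - qPoch (3 * D)) - (E3a * E3b * PF 1 - qPoch (3 * D)) := by ring
  rw [this]
  exact dvd_sub h1 h5

lemma Q3_zero : Q3 0 = 1 := by
  have h := Q3_mul 0
  rw [qPoch3, Finset.prod_range_zero, one_mul] at h
  rw [Q3] at h ⊢
  rw [qPoch3, Finset.prod_range_zero] at *
  exact h

noncomputable def vterm (m n : ℕ) : PowerSeries ℚ :=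
  X ^ (3 * (n * (n + m))) * PF (n + m + 1) * Q3 n

noncomputable def V (m : ℕ) : PowerSeries ℚ := ∑' n, vterm m n

noncomputable def pterm (k n : ℕ) : PowerSeries ℚ :=
  X ^ (3 * ((n + 1) * (n + k + 1))) * PF (n + k + 2) * Q3 n

noncomputable def Psi (k : ℕ) : PowerSeries ℚ := ∑' n, pterm k n

noncomputable def phiterm (k n : ℕ) : PowerSeries ℚ :=
  ((-1 : ℚ) ^ n) • (X : PowerSeries ℚ) ^ (3 * k * (n + 1) + 3 * (n + 1) * (n + 2) / 2)

noncomputable def Phi (k : ℕ) : PowerSeries ℚ := ∑' n, phiterm k n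

lemma vterm_dvd (m n : ℕ) : (X : PowerSeries ℚ) ^ n ∣ vterm m n := by
  have h : n ≤ 3 * (n * (n + m)) := by
    rcases Nat.eq_zero_or_pos n with h0 | h0
    · subst h0; simp
    · have : n * 1 ≤ n * (n + m) := Nat.mul_le_mul_left n (by omega)
      omega
  exact ((pow_dvd_pow (X : PowerSeries ℚ) h).mul_right _).mul_right _

lemma pterm_dvd (k n : ℕ) : (X : PowerSeries ℚ) ^ n ∣ pterm k n := by
  have h : n ≤ 3 * ((n + 1) * (n + k + 1)) := by
    have : (n + 1) * 1 ≤ (n + 1) * (n + k + 1) := Nat.mul_le_mul_left (n + 1) (by omega)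
    omega
  exact ((pow_dvd_pow (X : PowerSeries ℚ) h).mul_right _).mul_right _

lemma two_mul_tri (n : ℕ) : 2 * (3 * (n + 1) * (n + 2) / 2) = 3 * (n + 1) * (n + 2) := by
  apply Nat.two_mul_div_two_of_even
  have h : Even ((n + 1) * (n + 2)) := Nat.even_mul_succ_self (n + 1)
  rcases h with ⟨c, hc⟩
  exact ⟨3 * c, by rw [mul_assoc, hc]; ring⟩

lemma tri_succ (n : ℕ) : 3 * (n + 1) * (n + 2) / 2 + 3 * (n + 2) = 3 * (n + 2) * (n + 3) / 2 := by
  have h1 := two_mul_tri n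
  have h2 := two_mul_tri (n + 1)
  have h3 : 3 * (n + 1 + 1) * (n + 1 + 2) = 3 * (n + 1) * (n + 2) + 2 * (3 * (n + 2)) := by ring
  have h4 : (n + 1 + 1) = n + 2 := by ring
  have h5 : (n + 1 + 2) = n + 3 := by ring
  rw [h4, h5] at h2 h3
  omega

lemma phiterm_dvd (k n : ℕ) : (X : PowerSeries ℚ) ^ n ∣ phiterm k n := by
  have h1 := two_mul_tri n
  have h2 : 2 * n ≤ 3 * (n + 1) * (n + 2) := by
    have : (3 * (n + 1)) * 1 ≤ (3 * (n + 1)) * (n + 2) := Nat.mul_le_mul_left _ (by omega)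
    omega
  have h : n ≤ 3 * k * (n + 1) + 3 * (n + 1) * (n + 2) / 2 := by omega
  rw [phiterm, smul_eq_C_mul]
  exact (pow_dvd_pow (X : PowerSeries ℚ) h).mul_left _

lemma V_mod (m : ℕ) {D M : ℕ} (hDM : D ≤ M) :
    (X : PowerSeries ℚ) ^ D ∣ V m - ∑ n ∈ range M, vterm m n :=
  tsum_mod _ (vterm_dvd m) hDM

lemma Psi_mod (k : ℕ) {D M : ℕ} (hDM : D ≤ M) :
    (X : PowerSeries ℚ) ^ D ∣ Psi k - ∑ n ∈ range M, pterm k n :=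
  tsum_mod _ (pterm_dvd k) hDM

lemma Phi_mod (k : ℕ) {D M : ℕ} (hDM : D ≤ M) :
    (X : PowerSeries ℚ) ^ D ∣ Phi k - ∑ n ∈ range M, phiterm k n :=
  tsum_mod _ (phiterm_dvd k) hDM
lemma pterm_eq (k n : ℕ) : pterm k n
    = X ^ (3 * (k + 1)) * vterm (k + 2) n - X ^ (3 * (k + 1)) * pterm (k + 1) n := by
  rw [pterm, vterm, pterm, PF_succ (n + k + 2) (by omega)]
  rw [show n + k + 2 + 1 = n + k + 3 by ring, show n + (k + 2) + 1 = n + k + 3 by ring,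
    show n + (k + 1) + 2 = n + k + 3 by ring]
  have h1 : (X : PowerSeries ℚ) ^ (3 * (k + 1)) * X ^ (3 * (n * (n + (k + 2))))
      = X ^ (3 * ((n + 1) * (n + k + 1))) := by
    rw [← pow_add]; congr 1; ring
  have h2 : (X : PowerSeries ℚ) ^ (3 * (k + 1)) * X ^ (3 * ((n + 1) * (n + (k + 1) + 1)))
      = X ^ (3 * ((n + 1) * (n + k + 1))) * X ^ (3 * (n + k + 2)) := by
    rw [← pow_add, ← pow_add]; congr 1; ring
  linear_combination (PF (n + k + 3) * Q3 n) * h1 - (PF (n + k + 3) * Q3 n) * h2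

lemma vterm_split (m n : ℕ) : vterm m n
    = X ^ (3 * (n * (n + m))) * PF (n + m + 2) * Q3 n - X ^ (3 * (m + 1)) * vterm (m + 1) n := by
  rw [vterm, vterm, PF_succ (n + m + 1) (by omega)]
  rw [show n + m + 1 + 1 = n + m + 2 by ring, show n + (m + 1) + 1 = n + m + 2 by ring]
  have h2 : (X : PowerSeries ℚ) ^ (3 * (m + 1)) * X ^ (3 * (n * (n + (m + 1))))
      = X ^ (3 * (n * (n + m))) * X ^ (3 * (n + m + 1)) := by
    rw [← pow_add, ← pow_add]; congr 1; ring
  linear_combination (PF (n + m + 2) * Q3 n) * h2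

lemma u_zero (m : ℕ) : X ^ (3 * (0 * (0 + m))) * PF (0 + m + 2) * Q3 0 - vterm (m + 1) 0 = 0 := by
  rw [vterm]
  rw [show 0 + (m + 1) + 1 = 0 + m + 2 by ring]
  simp

lemma u_succ (m j : ℕ) :
    X ^ (3 * ((j + 1) * ((j + 1) + m))) * PF ((j + 1) + m + 2) * Q3 (j + 1) - vterm (m + 1) (j + 1)
      = X ^ (3 * (m + 1)) * vterm (m + 2) j := by
  rw [vterm, vterm]
  rw [show j + 1 + (m + 1) + 1 = j + 1 + m + 2 by ring, show j + (m + 2) + 1 = j + 1 + m + 2 by ring]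
  have h0 := one_sub_mul_Q3 j
  have h1 : (X : PowerSeries ℚ) ^ (3 * ((j + 1) * (j + 1 + (m + 1))))
      = X ^ (3 * ((j + 1) * (j + 1 + m))) * X ^ (3 * (j + 1)) := by
    rw [← pow_add]; congr 1; ring
  have h2 : (X : PowerSeries ℚ) ^ (3 * (m + 1)) * X ^ (3 * (j * (j + (m + 2))))
      = X ^ (3 * ((j + 1) * (j + 1 + m))) := by
    rw [← pow_add]; congr 1; ring
  calc X ^ (3 * ((j + 1) * (j + 1 + m))) * PF (j + 1 + m + 2) * Q3 (j + 1)
        - X ^ (3 * ((j + 1) * (j + 1 + (m + 1)))) * PF (j + 1 + m + 2) * Q3 (j + 1)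
      = X ^ (3 * ((j + 1) * (j + 1 + m))) * PF (j + 1 + m + 2)
          * ((1 - X ^ (3 * (j + 1))) * Q3 (j + 1)) := by rw [h1]; ring
    _ = X ^ (3 * ((j + 1) * (j + 1 + m))) * PF (j + 1 + m + 2) * Q3 j := by rw [h0]
    _ = X ^ (3 * (m + 1)) * (X ^ (3 * (j * (j + (m + 2)))) * PF (j + 1 + m + 2) * Q3 j) := by
        linear_combination (-(PF (j + 1 + m + 2) * Q3 j)) * h2
lemma Psi_rec (k : ℕ) : Psi k = X ^ (3 * (k + 1)) * V (k + 2) - X ^ (3 * (k + 1)) * Psi (k + 1) := by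
  apply ps_eq_of_forall_dvd
  intro D
  have h1 := Psi_mod k (D := D) (M := D) le_rfl
  have h2 := V_mod (k + 2) (D := D) (M := D) le_rfl
  have h3 := Psi_mod (k + 1) (D := D) (M := D) le_rfl
  have key : (∑ n ∈ range D, pterm k n)
      = X ^ (3 * (k + 1)) * (∑ n ∈ range D, vterm (k + 2) n)
        - X ^ (3 * (k + 1)) * ∑ n ∈ range D, pterm (k + 1) n := by
    rw [Finset.mul_sum, Finset.mul_sum, ← Finset.sum_sub_distrib]
    exact Finset.sum_congr rfl (fun n _ => pterm_eq k n)
  have expand : Psi k - (X ^ (3 * (k + 1)) * V (k + 2) - X ^ (3 * (k + 1)) * Psi (k + 1))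
      = (Psi k - ∑ n ∈ range D, pterm k n)
        - X ^ (3 * (k + 1)) * (V (k + 2) - ∑ n ∈ range D, vterm (k + 2) n)
        + X ^ (3 * (k + 1)) * (Psi (k + 1) - ∑ n ∈ range D, pterm (k + 1) n) := by
    rw [key]; ring
  rw [expand]
  exact dvd_add (dvd_sub h1 (h2.mul_left _)) (h3.mul_left _)

lemma V_rec (m : ℕ) :
    V m = V (m + 1) + X ^ (3 * (m + 1)) * V (m + 2) - X ^ (3 * (m + 1)) * V (m + 1) := by
  apply ps_eq_of_forall_dvd
  intro D
  have h1 := V_mod m (D := D) (M := D + 1) (by omega)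
  have h2 := V_mod (m + 1) (D := D) (M := D + 1) (by omega)
  have h3 := V_mod (m + 2) (D := D) (M := D) le_rfl
  have k1 : (∑ n ∈ range (D + 1), vterm m n)
      = (∑ n ∈ range (D + 1), X ^ (3 * (n * (n + m))) * PF (n + m + 2) * Q3 n)
        - X ^ (3 * (m + 1)) * ∑ n ∈ range (D + 1), vterm (m + 1) n := by
    rw [Finset.mul_sum, ← Finset.sum_sub_distrib]
    exact Finset.sum_congr rfl (fun n _ => vterm_split m n)
  have k2 : (∑ n ∈ range (D + 1), X ^ (3 * (n * (n + m))) * PF (n + m + 2) * Q3 n)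
      - (∑ n ∈ range (D + 1), vterm (m + 1) n)
      = X ^ (3 * (m + 1)) * ∑ j ∈ range D, vterm (m + 2) j := by
    rw [← Finset.sum_sub_distrib, Finset.sum_range_succ', u_zero, Finset.mul_sum]
    rw [add_zero]
    exact Finset.sum_congr rfl (fun j _ => u_succ m j)
  have key : (∑ n ∈ range (D + 1), vterm m n)
      = (∑ n ∈ range (D + 1), vterm (m + 1) n)
        + X ^ (3 * (m + 1)) * (∑ j ∈ range D, vterm (m + 2) j)
        - X ^ (3 * (m + 1)) * ∑ n ∈ range (D + 1), vterm (m + 1) n := by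
    linear_combination k1 + k2
  have expand : V m - (V (m + 1) + X ^ (3 * (m + 1)) * V (m + 2) - X ^ (3 * (m + 1)) * V (m + 1))
      = (V m - ∑ n ∈ range (D + 1), vterm m n)
        - (V (m + 1) - ∑ n ∈ range (D + 1), vterm (m + 1) n)
        - X ^ (3 * (m + 1)) * (V (m + 2) - ∑ j ∈ range D, vterm (m + 2) j)
        + X ^ (3 * (m + 1)) * (V (m + 1) - ∑ n ∈ range (D + 1), vterm (m + 1) n) := by
    rw [key]; ring
  rw [expand]
  exact dvd_add (dvd_sub (dvd_sub h1 h2) (h3.mul_left _)) (h2.mul_left _)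

lemma phiterm_zero (k : ℕ) : phiterm k 0 = X ^ (3 * (k + 1)) := by
  rw [phiterm, show 3 * k * (0 + 1) + 3 * (0 + 1) * (0 + 2) / 2 = 3 * (k + 1) by omega]
  rw [pow_zero, one_smul]

lemma phiterm_succ (k n : ℕ) :
    phiterm k (n + 1) = -(X ^ (3 * (k + 1)) * phiterm (k + 1) n) := by
  rw [phiterm, phiterm]
  rw [show (n + 1 : ℕ) + 1 = n + 2 by ring, show (n + 1 : ℕ) + 2 = n + 3 by ring]
  rw [← tri_succ n]
  rw [show 3 * k * (n + 2) + (3 * (n + 1) * (n + 2) / 2 + 3 * (n + 2))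
      = (3 * (k + 1)) + (3 * (k + 1) * (n + 1) + 3 * (n + 1) * (n + 2) / 2) by ring]
  have hsgn : ((-1 : ℚ)) ^ (n + 1) = -((-1 : ℚ) ^ n) := by ring
  rw [hsgn, neg_smul, pow_add, mul_smul_comm]
lemma Phi_rec (k : ℕ) : Phi k = X ^ (3 * (k + 1)) - X ^ (3 * (k + 1)) * Phi (k + 1) := by
  apply ps_eq_of_forall_dvd
  intro D
  have h1 := Phi_mod k (D := D) (M := D + 1) (by omega)
  have h2 := Phi_mod (k + 1) (D := D) (M := D) le_rfl
  have key : (∑ n ∈ range (D + 1), phiterm k n)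
      = X ^ (3 * (k + 1)) - X ^ (3 * (k + 1)) * ∑ j ∈ range D, phiterm (k + 1) j := by
    rw [Finset.sum_range_succ', phiterm_zero, Finset.mul_sum]
    rw [Finset.sum_congr rfl (fun j (_ : j ∈ range D) => phiterm_succ k j), Finset.sum_neg_distrib]
    ring
  have expand : Phi k - (X ^ (3 * (k + 1)) - X ^ (3 * (k + 1)) * Phi (k + 1))
      = (Phi k - ∑ n ∈ range (D + 1), phiterm k n)
        + X ^ (3 * (k + 1)) * (Phi (k + 1) - ∑ j ∈ range D, phiterm (k + 1) j) := by
    rw [key]; ring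
  rw [expand]
  exact dvd_add h1 (h2.mul_left _)

lemma PF_sub_one_mod (s : ℕ) (hs : 1 ≤ s) {D : ℕ} (hD : D ≤ 3 * s) :
    (X : PowerSeries ℚ) ^ D ∣ PF s - 1 := by
  have h1 := PF_mod s hs (D := D) (M := D) le_rfl
  have h2 : (X : PowerSeries ℚ) ^ D ∣ (∏ i ∈ range D, (1 - (X : PowerSeries ℚ) ^ (3 * (s + i)))) - 1 := by
    apply dvd_prod_sub_one
    intro i _
    have hle : D ≤ 3 * (s + i) := by omega
    have : (X : PowerSeries ℚ) ^ D ∣ X ^ (3 * (s + i)) := pow_dvd_pow _ hle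
    simpa using this.neg_right
  have : PF s - 1 = (PF s - ∏ i ∈ range D, (1 - (X : PowerSeries ℚ) ^ (3 * (s + i))))
      + ((∏ i ∈ range D, (1 - (X : PowerSeries ℚ) ^ (3 * (s + i)))) - 1) := by ring
  rw [this]
  exact dvd_add h1 h2

lemma V_one_mod (m : ℕ) {D : ℕ} (hD : D ≤ 3 * (m + 1)) :
    (X : PowerSeries ℚ) ^ D ∣ V m - 1 := by
  have h1 := V_mod m (D := D) (M := D + 1) (by omega)
  have h2 : (X : PowerSeries ℚ) ^ D ∣ (∑ n ∈ range (D + 1), vterm m n) - 1 := by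
    rw [Finset.sum_range_succ']
    have hz : vterm m 0 = PF (m + 2 - 1) := by
      rw [vterm, Q3_zero]
      rw [show (0 : ℕ) + m + 1 = m + 2 - 1 by omega]
      simp
    rw [hz]
    have h3 : (X : PowerSeries ℚ) ^ D ∣ PF (m + 2 - 1) - 1 :=
      PF_sub_one_mod _ (by omega) (by omega)
    have h4 : (X : PowerSeries ℚ) ^ D ∣ ∑ j ∈ range D, vterm m (j + 1) := by
      apply Finset.dvd_sum
      intro j _
      have hle : D ≤ 3 * ((j + 1) * ((j + 1) + m)) := by
        have : (m + 1) ≤ (j + 1) * (j + 1 + m) := by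
          have := Nat.mul_le_mul (le_refl 1) (le_refl 1)
          calc m + 1 ≤ j + 1 + m := by omega
            _ = 1 * (j + 1 + m) := by ring
            _ ≤ (j + 1) * (j + 1 + m) := Nat.mul_le_mul_right _ (by omega)
        omega
      rw [vterm]
      exact ((pow_dvd_pow (X : PowerSeries ℚ) hle).mul_right _).mul_right _
    have expand : (∑ j ∈ range D, vterm m (j + 1)) + PF (m + 2 - 1) - 1
        = (∑ j ∈ range D, vterm m (j + 1)) + (PF (m + 2 - 1) - 1) := by ring
    rw [expand]
    exact dvd_add h4 h3
  have : V m - 1 = (V m - ∑ n ∈ range (D + 1), vterm m n)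
      + ((∑ n ∈ range (D + 1), vterm m n) - 1) := by ring
  rw [this]
  exact dvd_add h1 h2

lemma V_diff (D : ℕ) : ∀ m, (X : PowerSeries ℚ) ^ D ∣ V m - V (m + 1) := by
  induction D with
  | zero => intro m; simpa using one_dvd _
  | succ d ih =>
      intro m
      have hrec : V m - V (m + 1) = X ^ (3 * (m + 1)) * (V (m + 2) - V (m + 1)) := by
        linear_combination V_rec m
      rw [hrec]
      have h1 : (X : PowerSeries ℚ) ^ 1 ∣ X ^ (3 * (m + 1)) := pow_dvd_pow _ (by omega)
      have h2 : (X : PowerSeries ℚ) ^ d ∣ V (m + 2) - V (m + 1) := by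
        have := ih (m + 1)
        simpa [neg_sub] using this.neg_right
      have := mul_dvd_mul h1 h2
      rwa [← pow_add, show 1 + d = d + 1 by omega] at this

lemma V_eq_succ (m : ℕ) : V m = V (m + 1) :=
  ps_eq_of_forall_dvd (fun D => V_diff D m)

lemma V_eq_add (m j : ℕ) : V m = V (m + j) := by
  induction j with
  | zero => rfl
  | succ n ih => rw [ih, show m + (n + 1) = (m + n) + 1 by ring, ← V_eq_succ]

lemma V_eq_one (m : ℕ) : V m = 1 := by
  apply ps_eq_of_forall_dvd
  intro D
  rw [V_eq_add m D]
  exact V_one_mod (m + D) (by omega)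

lemma Psi_rec' (k : ℕ) : Psi k = X ^ (3 * (k + 1)) - X ^ (3 * (k + 1)) * Psi (k + 1) := by
  rw [Psi_rec k, V_eq_one, mul_one]

lemma Phi_eq_Psi (k : ℕ) : Phi k = Psi k := by
  apply ps_eq_of_forall_dvd
  intro D
  induction D generalizing k with
  | zero => simpa using one_dvd _
  | succ d ih =>
      have hrec : Phi k - Psi k = -(X ^ (3 * (k + 1)) * (Phi (k + 1) - Psi (k + 1))) := by
        linear_combination Phi_rec k - Psi_rec' k
      rw [hrec]
      apply Dvd.dvd.neg_right
      have h1 : (X : PowerSeries ℚ) ^ 1 ∣ X ^ (3 * (k + 1)) := pow_dvd_pow _ (by omega)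
      have := mul_dvd_mul h1 (ih (k + 1))
      rwa [← pow_add, show 1 + d = d + 1 by omega] at this

noncomputable def bterm (n : ℕ) : PowerSeries ℚ :=
  (X : PowerSeries ℚ) ^ (3 * (n + 1) ^ 2) * (qPoch3 n * qPoch3 (n + 1))⁻¹

lemma bterm_dvd (n : ℕ) : (X : PowerSeries ℚ) ^ n ∣ bterm n := by
  have h1 : n + 1 ≤ (n + 1) ^ 2 := Nat.le_self_pow (by omega) _
  have h2 : (n + 1) ^ 2 ≤ 3 * (n + 1) ^ 2 := Nat.le_mul_of_pos_left _ (by omega)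
  have h : n ≤ 3 * (n + 1) ^ 2 := by
    calc n ≤ n + 1 := by omega
      _ ≤ (n + 1) ^ 2 := h1
      _ ≤ 3 * (n + 1) ^ 2 := h2
  exact (pow_dvd_pow (X : PowerSeries ℚ) h).mul_right _

lemma hinv (n : ℕ) : qPoch3 (n + 1) * (qPoch3 n * qPoch3 (n + 1))⁻¹ = Q3 n := by
  have hc : constantCoeff (qPoch3 n * qPoch3 (n + 1)) ≠ 0 := by
    rw [map_mul, constCoeff_qPoch3, constCoeff_qPoch3]; norm_num
  have h1 : (qPoch3 n * qPoch3 (n + 1)) * (qPoch3 n * qPoch3 (n + 1))⁻¹ = 1 :=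
    PowerSeries.mul_inv_cancel _ hc
  have h2 := Q3_mul n
  calc qPoch3 (n + 1) * (qPoch3 n * qPoch3 (n + 1))⁻¹
      = (qPoch3 n * Q3 n) * (qPoch3 (n + 1) * (qPoch3 n * qPoch3 (n + 1))⁻¹) := by
        rw [h2, one_mul]
    _ = Q3 n * ((qPoch3 n * qPoch3 (n + 1)) * (qPoch3 n * qPoch3 (n + 1))⁻¹) := by ring
    _ = Q3 n := by rw [h1, mul_one]

lemma PF1_bterm (n : ℕ) : PF 1 * bterm n = pterm 0 n := by
  rw [bterm, pterm, show n + 0 + 2 = n + 1 + 1 by ring,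
    show 3 * ((n + 1) * (n + 0 + 1)) = 3 * (n + 1) ^ 2 by ring, PF_one_eq (n + 1)]
  linear_combination (X ^ (3 * (n + 1) ^ 2) * PF (n + 1 + 1)) * hinv n

lemma PF1_B : PF 1 * (∑' n, bterm n) = Psi 0 := by
  apply ps_eq_of_forall_dvd
  intro D
  have hB := tsum_mod bterm bterm_dvd (D := D) (M := D) le_rfl
  have hP := Psi_mod 0 (D := D) (M := D) le_rfl
  have key : PF 1 * (∑ n ∈ range D, bterm n) = ∑ n ∈ range D, pterm 0 n := by
    rw [Finset.mul_sum]
    exact Finset.sum_congr rfl (fun n _ => PF1_bterm n)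
  have expand : PF 1 * (∑' n, bterm n) - Psi 0
      = PF 1 * ((∑' n, bterm n) - ∑ n ∈ range D, bterm n)
        - (Psi 0 - ∑ n ∈ range D, pterm 0 n) := by
    linear_combination key
  rw [expand]
  exact dvd_sub (hB.mul_left _) hP

lemma constCoeff_E : constantCoeff E = 1 := by
  have h := coeff_eq_of_dvd (E_mod (D := 1) (M := 1) le_rfl) (by omega : 0 < 1)
  rw [← coeff_zero_eq_constantCoeff_apply, h]
  simp [qPoch]

lemma constCoeff_E3ab : constantCoeff (E3a * E3b) = 1 := by
  have ha := coeff_eq_of_dvd (E3a_mod (D := 1) (M := 1) le_rfl) (by omega : 0 < 1)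
  have hb := coeff_eq_of_dvd (E3b_mod (D := 1) (M := 1) le_rfl) (by omega : 0 < 1)
  rw [map_mul, ← coeff_zero_eq_constantCoeff_apply, ← coeff_zero_eq_constantCoeff_apply, ha, hb]
  simp


theorem stmt14 :
    E⁻¹ * (∑' n : ℕ, ((-1 : ℚ) ^ n) • (X : PowerSeries ℚ) ^ (3 * (n + 1) * (n + 2) / 2)) =
      (E3a * E3b)⁻¹ *
        ∑' n : ℕ, (X : PowerSeries ℚ) ^ (3 * (n + 1) ^ 2) * (qPoch3 n * qPoch3 (n + 1))⁻¹ := by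
  have hA : (∑' n : ℕ, ((-1 : ℚ) ^ n) • (X : PowerSeries ℚ) ^ (3 * (n + 1) * (n + 2) / 2))
      = Phi 0 := by
    apply tsum_congr
    intro n
    rw [phiterm, show 3 * 0 * (n + 1) + 3 * (n + 1) * (n + 2) / 2 = 3 * (n + 1) * (n + 2) / 2 by omega]
  have hB : (∑' n : ℕ, (X : PowerSeries ℚ) ^ (3 * (n + 1) ^ 2) * (qPoch3 n * qPoch3 (n + 1))⁻¹)
      = ∑' n, bterm n := by
    apply tsum_congr
    intro n
    rw [bterm]
  rw [hA, hB]
  have hAB : Phi 0 = PF 1 * ∑' n, bterm n := by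
    rw [Phi_eq_Psi 0, ← PF1_B]
  have hcE : constantCoeff E ≠ 0 := by rw [constCoeff_E]; norm_num
  have hc3 : constantCoeff (E3a * E3b) ≠ 0 := by rw [constCoeff_E3ab]; norm_num
  have claim : E * ((E3a * E3b)⁻¹ * ∑' n, bterm n) = Phi 0 := by
    rw [E_split, hAB]
    calc E3a * E3b * PF 1 * ((E3a * E3b)⁻¹ * ∑' n, bterm n)
        = (E3a * E3b * (E3a * E3b)⁻¹) * (PF 1 * ∑' n, bterm n) := by ring
      _ = PF 1 * ∑' n, bterm n := by rw [PowerSeries.mul_inv_cancel _ hc3, one_mul]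
  rw [← claim, ← mul_assoc, PowerSeries.inv_mul_cancel _ hcE, one_mul]
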